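/- Let B' be a vertical strip over index set X of size w, let s = 4⌈1/α⌉, M = ⌈s·ln(s/(2ξ))⌉, and let B = ⌈αw/2⌉. Order the indices x_1,...,x_w of X so that f(x_1) ≤ ⋯ ≤ f(x_w), write w = qB + r with 0 ≤ r < B, and partition x_1,...,x_{qB} into q consecutive bins of size B. If a multiset R of sM − 1 independent uniform samples from X places at least M samples in every bin, then the set V consisting of the iM-th smallest f-values of the samples (for i = 1,...,s−1) intersects every value interval J with |{x ∈ X : f(x) ∈ J}| ≥ αw. -/

import Mathlib

/-- Deterministic part of the BuildNet correctness proof.  The strip has index set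
`X = x '' [1,w]` listed in `f`-sorted order `f(x 1) ≤ ⋯ ≤ f(x w)`; with
`s = 4⌈1/α⌉`, `M = ⌈s·ln(s/(2ξ))⌉`, `B = ⌈αw/2⌉`, `w = q·B + rr` (`rr < B`),
the first `q·B` positions are partitioned into `q` consecutive bins of size `B`.
`r 1, …, r N` (`N = sM − 1`) are the samples, `y 1 ≤ ⋯ ≤ y N` their `f`-values in
sorted order, and `V = {y (i·M) : 1 ≤ i ≤ s−1}`.  If every bin receives at least
`M` samples, then `V` intersects every value interval `[p, p']` with at least
`α·w` indices of `X` mapping into it. -/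
theorem stmt17 (α ξ : ℝ) (hα0 : 0 < α) (hα1 : α ≤ 1) (hξ0 : 0 < ξ) (hξ1 : ξ < 1)
    (w s M B q rr : ℕ) (hw : 0 < w)
    (hs : s = 4 * ⌈1 / α⌉₊)
    (hM : M = ⌈(s : ℝ) * Real.log ((s : ℝ) / (2 * ξ))⌉₊)
    (hB : B = ⌈α * (w : ℝ) / 2⌉₊)
    (hqr : w = q * B + rr) (hrr : rr < B)
    (f x : ℕ → ℕ)
    (hx_mono : ∀ j k, 1 ≤ j → j ≤ k → k ≤ w → f (x j) ≤ f (x k))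
    (hx_inj : ∀ j k, 1 ≤ j → j ≤ w → 1 ≤ k → k ≤ w → x j = x k → j = k)
    (X : Finset ℕ) (hX : X = (Finset.Icc 1 w).image x)
    (N : ℕ) (hN : N = s * M - 1)
    (r : ℕ → ℕ) (hr : ∀ j, 1 ≤ j → j ≤ N → r j ∈ X)
    (y : ℕ → ℕ)
    (hy_sorted : ∀ j k, 1 ≤ j → j ≤ k → k ≤ N → y j ≤ y k)
    (hy_perm : ∃ σ : Equiv.Perm ℕ,
      (∀ j, 1 ≤ j → j ≤ N → 1 ≤ σ j ∧ σ j ≤ N) ∧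
      (∀ j, 1 ≤ j → j ≤ N → y j = f (r (σ j))))
    (hbins : ∀ i, 1 ≤ i → i ≤ q →
      M ≤ ((Finset.Icc 1 N).filter
            (fun j => r j ∈ (Finset.Ioc ((i - 1) * B) (i * B)).image x)).card)
    (p p' : ℕ)
    (hpop : α * (w : ℝ) ≤ ((X.filter (fun z => p ≤ f z ∧ f z ≤ p')).card : ℝ)) :
    ∃ i, 1 ≤ i ∧ i ≤ s - 1 ∧ p ≤ y (i * M) ∧ y (i * M) ≤ p' := by
  -- Basic positivity facts
  have hs4 : 4 ≤ s := by
    rw [hs]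
    have : 1 ≤ ⌈1 / α⌉₊ := Nat.one_le_ceil_iff.mpr (by positivity)
    omega
  have hM1 : 1 ≤ M := by
    rw [hM]
    refine Nat.one_le_ceil_iff.mpr (mul_pos (by exact_mod_cast (by omega : 0 < s)) ?_)
    refine Real.log_pos ?_
    rw [lt_div_iff₀ (by linarith)]
    have : (4 : ℝ) ≤ (s : ℝ) := by exact_mod_cast hs4
    linarith
  have hB1 : 1 ≤ B := by
    rw [hB]
    exact Nat.one_le_ceil_iff.mpr (by positivity)
  have hBpos : (0 : ℕ) < B := hB1
  -- The preimage run I in sorted index order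
  classical
  set I : Finset ℕ := (Finset.Icc 1 w).filter (fun j => p ≤ f (x j) ∧ f (x j) ≤ p')
    with hIdef
  have hcardI : (X.filter (fun z => p ≤ f z ∧ f z ≤ p')).card = I.card := by
    rw [hX, Finset.filter_image]
    exact Finset.card_image_of_injOn (fun j hj k hk hjk => by
      simp only [Finset.coe_filter, Finset.mem_Icc, Set.mem_setOf_eq] at hj hk
      exact hx_inj j k hj.1.1 hj.1.2 hk.1.1 hk.1.2 hjk)
  -- 2B ≤ |I| + 1
  have hIlb : 2 * B ≤ I.card + 1 := by
    have hBlt : (B : ℝ) < α * (w : ℝ) / 2 + 1 := by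
      rw [hB]; exact Nat.ceil_lt_add_one (by positivity)
    have : (2 * B : ℝ) < (I.card : ℝ) + 2 := by
      rw [← hcardI]; push_cast; linarith
    have : 2 * B < I.card + 2 := by exact_mod_cast this
    omega
  have hIne : I.Nonempty := Finset.card_pos.mp (by omega)
  set a := I.min' hIne with ha
  set b := I.max' hIne with hb
  have haI : a ∈ I := Finset.min'_mem _ _
  have hbI : b ∈ I := Finset.max'_mem _ _
  have hab : a ≤ b := Finset.min'_le _ _ hbI
  rw [hIdef, Finset.mem_filter, Finset.mem_Icc] at haI hbI
  clear_value a b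
  have hIcc : Finset.Icc a b ⊆ I := by
    intro j hj
    rw [Finset.mem_Icc] at hj
    rw [hIdef, Finset.mem_filter, Finset.mem_Icc]
    have h1 : f (x a) ≤ f (x j) := hx_mono a j haI.1.1 hj.1 (le_trans hj.2 hbI.1.2)
    have h2 : f (x j) ≤ f (x b) := hx_mono j b (le_trans haI.1.1 hj.1) hj.2 hbI.1.2
    exact ⟨⟨le_trans haI.1.1 hj.1, le_trans hj.2 hbI.1.2⟩,
      le_trans haI.2.1 h1, le_trans h2 hbI.2.2⟩
  have hsubI : I ⊆ Finset.Icc a b := by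
    intro j hj
    rw [Finset.mem_Icc, ha, hb]
    exact ⟨Finset.min'_le _ _ hj, Finset.le_max' _ _ hj⟩
  have hcard_ab : I.card ≤ b + 1 - a := by
    have := Finset.card_le_card hsubI
    simpa [Nat.card_Icc] using this
  have ha1 : 1 ≤ a := haI.1.1
  have hbw : b ≤ w := hbI.1.2
  -- the run has length ≥ 2B-1, so a + 2B ≤ b + 2
  have hrun : a + 2 * B ≤ b + 2 := by omega
  -- find a full bin inside [a, b]
  obtain ⟨i0, hi01, hi0q, hbin_lo, hbin_hi⟩ :
      ∃ i0, 1 ≤ i0 ∧ i0 ≤ q ∧ a ≤ (i0 - 1) * B + 1 ∧ i0 * B ≤ b := by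
    obtain ⟨D, m, hdm, hmlt⟩ : ∃ D m, B * D + m = a + B - 2 ∧ m < B :=
      ⟨(a + B - 2) / B, (a + B - 2) % B, Nat.div_add_mod _ _, Nat.mod_lt _ hBpos⟩
    have hBD1 : a ≤ B * D + 1 := by omega
    have hDq : D < q := by
      have h3 : B * D < B * q := by rw [Nat.mul_comm B q]; omega
      exact Nat.lt_of_mul_lt_mul_left h3
    refine ⟨D + 1, by omega, by omega, ?_, ?_⟩
    · have h : D + 1 - 1 = D := by omega
      rw [h, Nat.mul_comm]
      exact hBD1
    · have h : (D + 1) * B = B * D + B := by ring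
      omega
  -- all samples in bin i0 have f-value in [p, p']
  have hgood : ∀ j, j ∈ (Finset.Icc 1 N).filter
      (fun j => r j ∈ (Finset.Ioc ((i0 - 1) * B) (i0 * B)).image x) →
      p ≤ f (r j) ∧ f (r j) ≤ p' := by
    intro j hj
    rw [Finset.mem_filter, Finset.mem_image] at hj
    obtain ⟨k, hk, hkx⟩ := hj.2
    rw [Finset.mem_Ioc] at hk
    have hkI : k ∈ I := hIcc (Finset.mem_Icc.mpr ⟨by omega, le_trans hk.2 hbin_hi⟩)
    rw [hIdef, Finset.mem_filter] at hkI
    rw [← hkx]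
    exact hkI.2
  have hScard : M ≤ ((Finset.Icc 1 N).filter
      (fun j => r j ∈ (Finset.Ioc ((i0 - 1) * B) (i0 * B)).image x)).card :=
    hbins i0 hi01 hi0q
  -- transfer to the sorted sequence y via the permutation σ
  obtain ⟨σ, hσr, hσv⟩ := hy_perm
  have himg : (Finset.Icc 1 N).image σ = Finset.Icc 1 N := by
    apply Finset.eq_of_subset_of_card_le
    · intro j hj
      rw [Finset.mem_image] at hj
      obtain ⟨j', hj', rfl⟩ := hj
      rw [Finset.mem_Icc] at hj' ⊢
      exact hσr j' hj'.1 hj'.2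
    · rw [Finset.card_image_of_injective _ σ.injective]
  set T : Finset ℕ := (Finset.Icc 1 N).filter (fun j => p ≤ y j ∧ y j ≤ p') with hTdef
  have hTcard : M ≤ T.card := by
    refine le_trans hScard (Finset.card_le_card_of_injOn σ.symm ?_ ?_)
    · intro j hj
      have hjIcc : j ∈ Finset.Icc 1 N := (Finset.mem_filter.mp hj).1
      rw [← himg, Finset.mem_image] at hjIcc
      obtain ⟨j', hj', hjj'⟩ := hjIcc
      have hsymm : σ.symm j = j' := by rw [← hjj']; exact σ.symm_apply_apply j'
      rw [Finset.mem_Icc] at hj'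
      have hyj : y j' = f (r j) := by rw [hσv j' hj'.1 hj'.2, hjj']
      rw [hTdef, Finset.mem_coe, Finset.mem_filter, hsymm, Finset.mem_Icc, hyj]
      exact ⟨hj', hgood j hj⟩
    · exact fun u _ v _ huv => σ.symm.injective huv
  -- T is an interval [c, d] of length ≥ M
  have hTne : T.Nonempty := Finset.card_pos.mp (by omega)
  set c := T.min' hTne with hc
  set d := T.max' hTne with hd
  have hcT : c ∈ T := Finset.min'_mem _ _
  have hdT : d ∈ T := Finset.max'_mem _ _
  have hcd : c ≤ d := Finset.min'_le _ _ hdT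
  rw [hTdef, Finset.mem_filter, Finset.mem_Icc] at hcT hdT
  clear_value c d
  have hTcc : Finset.Icc c d ⊆ T := by
    intro j hj
    rw [Finset.mem_Icc] at hj
    rw [hTdef, Finset.mem_filter, Finset.mem_Icc]
    have h1 : y c ≤ y j := hy_sorted c j hcT.1.1 hj.1 (le_trans hj.2 hdT.1.2)
    have h2 : y j ≤ y d := hy_sorted j d (le_trans hcT.1.1 hj.1) hj.2 hdT.1.2
    exact ⟨⟨le_trans hcT.1.1 hj.1, le_trans hj.2 hdT.1.2⟩,
      le_trans hcT.2.1 h1, le_trans h2 hdT.2.2⟩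
  have hsubT : T ⊆ Finset.Icc c d := by
    intro j hj
    rw [Finset.mem_Icc, hc, hd]
    exact ⟨Finset.min'_le _ _ hj, Finset.le_max' _ _ hj⟩
  have hcard_cd : T.card ≤ d + 1 - c := by
    have := Finset.card_le_card hsubT
    simpa [Nat.card_Icc] using this
  have hc1 : 1 ≤ c := hcT.1.1
  have hdN : d ≤ N := hdT.1.2
  have hMcd : c + M ≤ d + 1 := by omega
  -- pick the multiple of M inside [c, d]
  obtain ⟨E, m2, hdm2, hm2⟩ : ∃ E m2, M * E + m2 = c + M - 1 ∧ m2 < M :=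
    ⟨(c + M - 1) / M, (c + M - 1) % M, Nat.div_add_mod _ _, Nat.mod_lt _ (by omega)⟩
  have hME1 : c ≤ M * E := by omega
  have hME2 : M * E ≤ c + M - 1 := by omega
  have hE1 : 1 ≤ E := by
    rcases Nat.eq_zero_or_pos E with hE0 | hE0
    · subst hE0; simp at hME1; omega
    · exact hE0
  have hEs : E < s := by
    have hsM : 1 ≤ s * M := by
      have := Nat.mul_le_mul hs4 hM1; omega
    have h2 : M * E < M * s := by rw [Nat.mul_comm M s]; omega
    exact Nat.lt_of_mul_lt_mul_left h2
  have hEM_mem : E * M ∈ T := by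
    apply hTcc
    rw [Finset.mem_Icc, Nat.mul_comm]
    exact ⟨hME1, by omega⟩
  rw [hTdef, Finset.mem_filter] at hEM_mem
  exact ⟨E, hE1, by omega, hEM_mem.2.1, hEM_mem.2.2⟩
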